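/- Let T be a continuous linear operator on X. Assume there exist a dense linear subspace X₀ of X with T(X₀) ⊆ X₀ and every vector of X₀ periodic for T, and a constant α ∈ (0,1), such that for every x ∈ X₀ and every ε > 0 there exist z ∈ X₀ and an integer n ≥ 1 with: (1) ‖z‖ < ε; (2) ‖T^{n+k}z − T^{k}x‖ < ε for every integer k with 0 ≤ k ≤ αn. Then T is chaotic and U-frequently hypercyclic. -/

import Mathlib

section Aux

variable {𝕜 : Type*} [RCLike 𝕜] {X : Type*} [NormedAddCommGroup X] [NormedSpace 𝕜 X]

lemma st13_pow_apply_add (T : X →L[𝕜] X) (a b : ℕ) (v : X) :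
    (T ^ (a + b)) v = (T ^ a) ((T ^ b) v) := by
  rw [pow_add]; rfl

lemma st13_pow_mem (T : X →L[𝕜] X) (X₀ : Submodule 𝕜 X) (hinv : ∀ x ∈ X₀, T x ∈ X₀) :
    ∀ i : ℕ, ∀ x ∈ X₀, (T ^ i) x ∈ X₀ := by
  intro i
  induction i with
  | zero => intro x hx; simpa using hx
  | succ i ih =>
    intro x hx
    have : (T ^ (i + 1)) x = (T ^ i) (T x) := by
      rw [pow_succ]; rfl
    rw [this]
    exact ih _ (hinv x hx)

lemma st13_per_mul (T : X →L[𝕜] X) (m : ℕ) (w : X) (hw : (T ^ m) w = w) :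
    ∀ q : ℕ, (T ^ (m * q)) w = w := by
  intro q
  induction q with
  | zero => simp
  | succ q ih =>
    have : m * (q + 1) = m * q + m := by ring
    rw [this, st13_pow_apply_add, hw, ih]

lemma st13_per_shift (T : X →L[𝕜] X) (m q k : ℕ) (w : X) (hw : (T ^ m) w = w) :
    (T ^ (m * q + k)) w = (T ^ k) w := by
  rw [add_comm, st13_pow_apply_add, st13_per_mul T m w hw q]

end Aux

section Step

variable {𝕜 : Type*} [RCLike 𝕜] {X : Type*} [NormedAddCommGroup X] [NormedSpace 𝕜 X]

lemma st13_step (T : X →L[𝕜] X) (X₀ : Submodule 𝕜 X)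
    (hinv : ∀ x ∈ X₀, T x ∈ X₀)
    (hper : ∀ x ∈ X₀, ∃ m : ℕ, 1 ≤ m ∧ (T ^ m) x = x)
    (α : ℝ) (hα0 : 0 < α)
    (h : ∀ x ∈ X₀, ∀ ε : ℝ, 0 < ε → ∃ z ∈ X₀, ∃ n : ℕ, 1 ≤ n ∧
      ‖z‖ < ε ∧ ∀ k : ℕ, (k : ℝ) ≤ α * n → ‖(T ^ (n + k)) z - (T ^ k) x‖ < ε)
    (w : X) (hw : w ∈ X₀) (y : X) (hy : y ∈ X₀) (B : ℕ) (ε : ℝ) (hε : 0 < ε) :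
    ∃ z ∈ X₀, ∃ n : ℕ, B < n ∧ (∀ j ≤ B, ‖(T ^ j) z‖ ≤ ε) ∧
      (∀ k : ℕ, (k : ℝ) ≤ α * n → ‖(T ^ (n + k)) (w + z) - (T ^ k) y‖ ≤ ε) := by
  obtain ⟨m, hm1, hmw⟩ := hper w hw
  have hx0mem : y - w ∈ X₀ := sub_mem hy hw
  by_cases hx00 : y - w = 0
  · have hwy : w = y := (sub_eq_zero.mp hx00).symm
    refine ⟨0, zero_mem _, m * (B + 1), ?_, ?_, ?_⟩
    · calc B < B + 1 := Nat.lt_succ_self B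
        _ ≤ m * (B + 1) := Nat.le_mul_of_pos_left _ hm1
    · intro j _
      simp [hε.le]
    · intro k hk
      rw [add_zero, st13_per_shift T m (B + 1) k w hmw, hwy]
      simp [hε.le]
  · -- nontrivial case
    obtain ⟨C, hC1, hbound⟩ : ∃ C : ℝ, 1 ≤ C ∧ ∀ i ≤ B + m, ∀ v : X, ‖(T ^ i) v‖ ≤ C * ‖v‖ := by
      have hsum_nonneg : (0:ℝ) ≤ ∑ i ∈ Finset.range (B + m + 1), ‖T ^ i‖ :=
        Finset.sum_nonneg fun i _ => norm_nonneg _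
      refine ⟨1 + ∑ i ∈ Finset.range (B + m + 1), ‖T ^ i‖, by linarith, ?_⟩
      intro i hi v
      calc ‖(T ^ i) v‖ ≤ ‖T ^ i‖ * ‖v‖ := (T ^ i).le_opNorm v
        _ ≤ _ * ‖v‖ := by
          apply mul_le_mul_of_nonneg_right _ (norm_nonneg v)
          have := Finset.single_le_sum (fun i (_ : i ∈ Finset.range (B + m + 1)) =>
            norm_nonneg (T ^ i)) (Finset.mem_range.mpr (Nat.lt_succ_of_le hi))
          linarith
    have hCpos : (0:ℝ) < C := lt_of_lt_of_le one_pos hC1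
    have hx0pos : (0:ℝ) < ‖y - w‖ := norm_pos_iff.mpr hx00
    obtain ⟨ε', hε', hCε'⟩ : ∃ e : ℝ, 0 < e ∧ C * e = min ε ‖y - w‖ / 2 :=
      ⟨min ε ‖y - w‖ / (2 * C), div_pos (lt_min hε hx0pos) (by positivity), by
        field_simp⟩
    have hminε : min ε ‖y - w‖ ≤ ε := min_le_left _ _
    have hminx : min ε ‖y - w‖ ≤ ‖y - w‖ := min_le_right _ _
    have h4 : ε' ≤ C * ε' := le_mul_of_one_le_left hε'.le hC1
    have hε'ε : ε' ≤ ε := by linarith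
    obtain ⟨z0, hz0mem, n0, hn01, hz0norm, hz0⟩ := h (y - w) hx0mem ε' hε'
    -- force n0 > B + m
    have hk0 : ‖(T ^ n0) z0 - (y - w)‖ < ε' := by
      have := hz0 0 (by simpa using mul_nonneg hα0.le (Nat.cast_nonneg n0))
      simpa using this
    have hn0M : B + m < n0 := by
      by_contra hle
      push_neg at hle
      have h1 : ‖(T ^ n0) z0‖ ≤ C * ε' := by
        calc ‖(T ^ n0) z0‖ ≤ C * ‖z0‖ := hbound n0 hle z0
          _ ≤ C * ε' := mul_le_mul_of_nonneg_left hz0norm.le hCpos.le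
      have h2 : ‖y - w‖ ≤ ‖(y - w) - (T ^ n0) z0‖ + ‖(T ^ n0) z0‖ := by
        simpa [sub_neg_eq_add] using norm_add_le ((y - w) - (T ^ n0) z0) ((T ^ n0) z0)
      have h3 : ‖(y - w) - (T ^ n0) z0‖ < ε' := by
        rw [← norm_neg]; simpa [neg_sub] using hk0
      linarith
    obtain ⟨q, j0, hdm, hj0m⟩ : ∃ q j0, m * q + j0 = n0 ∧ j0 < m :=
      ⟨n0 / m, n0 % m, Nat.div_add_mod n0 m, Nat.mod_lt _ (by omega)⟩
    have hBn : B < m * q := by omega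
    refine ⟨(T ^ j0) z0, st13_pow_mem T X₀ hinv j0 z0 hz0mem, m * q, hBn, ?_, ?_⟩
    · intro j hj
      have heq : ‖(T ^ j) ((T ^ j0) z0)‖ = ‖(T ^ (j + j0)) z0‖ := by
        rw [st13_pow_apply_add]
      rw [heq]
      have hjM : j + j0 ≤ B + m := by omega
      calc ‖(T ^ (j + j0)) z0‖ ≤ C * ‖z0‖ := hbound _ hjM z0
        _ ≤ C * ε' := mul_le_mul_of_nonneg_left hz0norm.le hCpos.le
        _ ≤ ε := by linarith
    · intro k hk
      have hkn0 : (k:ℝ) ≤ α * n0 := by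
        refine le_trans hk ?_
        apply mul_le_mul_of_nonneg_left _ hα0.le
        exact_mod_cast (by omega : m * q ≤ n0)
      have hmain := hz0 k hkn0
      have heq : (T ^ (m * q + k)) (w + (T ^ j0) z0) - (T ^ k) y
          = (T ^ (n0 + k)) z0 - (T ^ k) (y - w) := by
        rw [map_add]
        have e1 : (T ^ (m * q + k)) w = (T ^ k) w := st13_per_shift T m q k w hmw
        have e3 : m * q + k + j0 = n0 + k := by omega
        have e2 : (T ^ (m * q + k)) ((T ^ j0) z0) = (T ^ (n0 + k)) z0 := by
          rw [← st13_pow_apply_add, e3]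
        rw [e1, e2, map_sub]
        abel
      rw [heq]
      linarith [hmain]

end Step

noncomputable section Main

variable {𝕜 : Type*} [RCLike 𝕜] {X : Type*} [NormedAddCommGroup X] [NormedSpace 𝕜 X]

/-- scale bound -/
def st13_Bof (α : ℝ) (n : ℕ) : ℕ := n + ⌊α * n⌋₊

lemma st13_Bof_mono (α : ℝ) (hα : 0 ≤ α) : Monotone (st13_Bof α) := by
  intro a b hab
  unfold st13_Bof
  have : ⌊α * a⌋₊ ≤ ⌊α * b⌋₊ :=
    Nat.floor_le_floor (mul_le_mul_of_nonneg_left (by exact_mod_cast hab) hα)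
  omega

def st13_Good (T : X →L[𝕜] X) (α : ℝ) (Y : ℕ → X) (e : ℕ → ℕ) (s : ℕ)
    (p q : X × ℕ) : Prop :=
  st13_Bof α p.2 < q.2 ∧
  (∀ j ≤ st13_Bof α p.2, ‖(T ^ j) (q.1 - p.1)‖ ≤ (1/2 : ℝ) ^ s) ∧
  (∀ k : ℕ, (k : ℝ) ≤ α * q.2 → ‖(T ^ (q.2 + k)) q.1 - (T ^ k) (Y (e s))‖ ≤ (1/2 : ℝ) ^ s)

lemma st13_exists_F (T : X →L[𝕜] X) (X₀ : Submodule 𝕜 X)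
    (hinv : ∀ x ∈ X₀, T x ∈ X₀)
    (hper : ∀ x ∈ X₀, ∃ m : ℕ, 1 ≤ m ∧ (T ^ m) x = x)
    (α : ℝ) (hα0 : 0 < α)
    (h : ∀ x ∈ X₀, ∀ ε : ℝ, 0 < ε → ∃ z ∈ X₀, ∃ n : ℕ, 1 ≤ n ∧
      ‖z‖ < ε ∧ ∀ k : ℕ, (k : ℝ) ≤ α * n → ‖(T ^ (n + k)) z - (T ^ k) x‖ < ε)
    (Y : ℕ → X) (hY : ∀ i, Y i ∈ X₀) (e : ℕ → ℕ) :
    ∃ F : ℕ → {p : X × ℕ // p.1 ∈ X₀}, (F 0).1 = ((0 : X), 0) ∧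
      ∀ s, st13_Good T α Y e s (F s).1 (F (s+1)).1 := by
  have step : ∀ (s : ℕ) (p : {p : X × ℕ // p.1 ∈ X₀}),
      ∃ q : {p : X × ℕ // p.1 ∈ X₀}, st13_Good T α Y e s p.1 q.1 := by
    rintro s ⟨⟨w, nn⟩, hw⟩
    obtain ⟨z, hz, n', hBn', hzsmall, horb⟩ :=
      st13_step T X₀ hinv hper α hα0 h w hw (Y (e s)) (hY _) (st13_Bof α nn)
        ((1/2 : ℝ) ^ s) (by positivity)
    refine ⟨⟨(w + z, n'), add_mem hw hz⟩, hBn', ?_, ?_⟩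
    · intro j hj
      simpa [add_sub_cancel_left] using hzsmall j hj
    · intro k hk
      exact horb k hk
  exact ⟨fun s => Nat.rec ⟨((0 : X), 0), by simpa using X₀.zero_mem⟩
      (fun s p => Classical.choose (step s p)) s,
    rfl, fun s => Classical.choose_spec (step s _)⟩

end Main



/-- The upper density of a set `A ⊆ ℕ`: `limsup_N #{n ∈ A : n ≤ N} / (N + 1)`. -/
noncomputable def upperDensity (A : Set ℕ) : ℝ :=
  Filter.limsup (fun N : ℕ => ((A ∩ Set.Iic N).ncard : ℝ) / ((N : ℝ) + 1)) Filter.atTop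

/-- Let `T` be a continuous linear operator on a separable Banach space `X` (over `ℝ` or
`ℂ`). Assume there are a dense linear subspace `X₀` with `T(X₀) ⊆ X₀` consisting of
periodic vectors of `T`, and a constant `α ∈ (0,1)`, such that for every `x ∈ X₀` and
`ε > 0` there exist `z ∈ X₀` and `n ≥ 1` with `‖z‖ < ε` and
`‖T^{n+k}z − T^k x‖ < ε` for all `0 ≤ k ≤ αn`. Then `T` is chaotic and `U`-frequently
hypercyclic. -/
theorem statement13 {𝕜 : Type*} [RCLike 𝕜] {X : Type*} [NormedAddCommGroup X]
    [NormedSpace 𝕜 X] [CompleteSpace X] [TopologicalSpace.SeparableSpace X]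
    (T : X →L[𝕜] X) (X₀ : Submodule 𝕜 X)
    (hdense : Dense (X₀ : Set X))
    (hinv : ∀ x ∈ X₀, T x ∈ X₀)
    (hper : ∀ x ∈ X₀, ∃ m : ℕ, 1 ≤ m ∧ (T ^ m) x = x)
    (α : ℝ) (hα0 : 0 < α) (hα1 : α < 1)
    (h : ∀ x ∈ X₀, ∀ ε : ℝ, 0 < ε → ∃ z ∈ X₀, ∃ n : ℕ, 1 ≤ n ∧
      ‖z‖ < ε ∧ ∀ k : ℕ, (k : ℝ) ≤ α * n → ‖(T ^ (n + k)) z - (T ^ k) x‖ < ε) :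
    ((∃ x : X, Dense (Set.range fun n : ℕ => (T ^ n) x)) ∧
      Dense {z : X | ∃ m : ℕ, 1 ≤ m ∧ (T ^ m) z = z}) ∧
    (∃ x : X, ∀ V : Set X, IsOpen V → V.Nonempty →
      0 < upperDensity {n : ℕ | (T ^ n) x ∈ V}) := by
  -- dense periodic points
  have hperdense : Dense {z : X | ∃ m : ℕ, 1 ≤ m ∧ (T ^ m) z = z} :=
    hdense.mono fun z hz => hper z hz
  -- a dense sequence inside X₀
  haveI : SecondCountableTopology X :=
    UniformSpace.secondCountable_of_separable X
  haveI : Nonempty ↥(X₀ : Set X) := ⟨⟨0, X₀.zero_mem⟩⟩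
  obtain ⟨u, hu⟩ := TopologicalSpace.exists_dense_seq ↥(X₀ : Set X)
  set Y : ℕ → X := fun i => (u i : X) with hYdef
  have hY : ∀ i, Y i ∈ X₀ := fun i => (u i).2
  have hYdense : DenseRange Y := hdense.denseRange_val.comp hu continuous_subtype_val
  -- enumeration with each value attained at arbitrarily large indices
  set e : ℕ → ℕ := fun s => (Nat.unpair s).2 with hedef
  have he : ∀ i s₀ : ℕ, ∃ s, s₀ ≤ s ∧ e s = i := fun i s₀ =>
    ⟨Nat.pair s₀ i, Nat.left_le_pair _ _, by simp [hedef]⟩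
  -- the recursive construction
  obtain ⟨F, hF0, hG⟩ := st13_exists_F T X₀ hinv hper α hα0 h Y hY e
  -- basic monotonicity facts
  have hnmono : StrictMono (fun s => (F s).1.2) := by
    apply strictMono_nat_of_lt_succ
    intro s
    exact lt_of_le_of_lt (Nat.le_add_right _ _) (hG s).1
  have hn_ge : ∀ s, s ≤ (F s).1.2 := fun s => hnmono.le_apply
  have hBmono : ∀ s t : ℕ, s ≤ t → st13_Bof α ((F s).1.2) ≤ st13_Bof α ((F t).1.2) :=
    fun s t hst => st13_Bof_mono α hα0.le (hnmono.monotone hst)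
  -- the limit vector
  have hdist : ∀ s, dist ((F s).1.1) ((F (s+1)).1.1) ≤ 1 * (1/2 : ℝ) ^ s := by
    intro s
    have h0 := (hG s).2.1 0 (Nat.zero_le _)
    rw [pow_zero] at h0
    rw [dist_eq_norm, one_mul, norm_sub_rev]
    simpa using h0
  have hcauchy : CauchySeq (fun s => (F s).1.1) :=
    cauchySeq_of_le_geometric (1/2) 1 (by norm_num) hdist
  obtain ⟨x, hx⟩ := cauchySeq_tendsto_of_complete hcauchy
  -- tail estimate
  have htail : ∀ s, ∀ j ≤ st13_Bof α ((F (s+1)).1.2),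
      ‖(T ^ j) x - (T ^ j) ((F (s+1)).1.1)‖ ≤ (1/2 : ℝ) ^ s := by
    intro s j hj
    have key : ∀ d : ℕ, ‖(T ^ j) ((F (s+1+d)).1.1) - (T ^ j) ((F (s+1)).1.1)‖
        ≤ (1/2 : ℝ) ^ s - (1/2 : ℝ) ^ (s+d) := by
      intro d
      induction d with
      | zero => simp
      | succ d ih =>
        have hjd : j ≤ st13_Bof α ((F (s+1+d)).1.2) :=
          le_trans hj (hBmono _ _ (by omega))
        have hstep := (hG (s+1+d)).2.1 j hjd
        have hre : s+1+(d+1) = (s+1+d)+1 := by omega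
        rw [hre]
        have htri : ‖(T ^ j) ((F ((s+1+d)+1)).1.1) - (T ^ j) ((F (s+1)).1.1)‖
            ≤ ‖(T ^ j) ((F ((s+1+d)+1)).1.1) - (T ^ j) ((F (s+1+d)).1.1)‖
              + ‖(T ^ j) ((F (s+1+d)).1.1) - (T ^ j) ((F (s+1)).1.1)‖ :=
          norm_sub_le_norm_sub_add_norm_sub _ _ _
        have hone : ‖(T ^ j) ((F ((s+1+d)+1)).1.1) - (T ^ j) ((F (s+1+d)).1.1)‖
            ≤ (1/2 : ℝ) ^ (s+1+d) := by
          rw [← map_sub]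
          exact hstep
        have hp1 : (1/2 : ℝ) ^ (s+1+d) = (1/2) ^ (s+d) * (1/2) := by
          rw [← pow_succ]
          congr 1
          omega
        have hp2 : (1/2 : ℝ) ^ (s+(d+1)) = (1/2) ^ (s+d) * (1/2) := by
          rw [show s+(d+1) = (s+d)+1 from by omega, pow_succ]
        have hnn : (0:ℝ) ≤ (1/2 : ℝ) ^ (s+d) := by positivity
        rw [hp2]
        rw [hp1] at hone
        linarith
    have hlim2 : Filter.Tendsto (fun d => (T ^ j) ((F (s+1+d)).1.1)) Filter.atTop
        (nhds ((T ^ j) x)) := by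
      refine ((T ^ j).continuous.tendsto x).comp (hx.comp ?_)
      exact Filter.tendsto_atTop_mono (fun d => Nat.le_add_left d (s+1)) Filter.tendsto_id
    have hlim3 : Filter.Tendsto
        (fun d => ‖(T ^ j) ((F (s+1+d)).1.1) - (T ^ j) ((F (s+1)).1.1)‖) Filter.atTop
        (nhds ‖(T ^ j) x - (T ^ j) ((F (s+1)).1.1)‖) :=
      (hlim2.sub tendsto_const_nhds).norm
    refine le_of_tendsto hlim3 (Filter.Eventually.of_forall fun d => ?_)
    have := key d
    have hnn : (0:ℝ) ≤ (1/2 : ℝ) ^ (s+d) := by positivity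
    linarith
  -- main orbit estimate
  have hmain : ∀ s, ∀ k : ℕ, (k : ℝ) ≤ α * ((F (s+1)).1.2) →
      ‖(T ^ ((F (s+1)).1.2 + k)) x - (T ^ k) (Y (e s))‖ ≤ (1/2 : ℝ) ^ s + (1/2 : ℝ) ^ s := by
    intro s k hk
    have h1 := (hG s).2.2 k hk
    have hjle : (F (s+1)).1.2 + k ≤ st13_Bof α ((F (s+1)).1.2) := by
      have hkfl : k ≤ ⌊α * ((F (s+1)).1.2)⌋₊ := Nat.le_floor hk
      unfold st13_Bof
      omega
    have h2 := htail s _ hjle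
    calc ‖(T ^ ((F (s+1)).1.2 + k)) x - (T ^ k) (Y (e s))‖
        ≤ ‖(T ^ ((F (s+1)).1.2 + k)) x - (T ^ ((F (s+1)).1.2 + k)) ((F (s+1)).1.1)‖
          + ‖(T ^ ((F (s+1)).1.2 + k)) ((F (s+1)).1.1) - (T ^ k) (Y (e s))‖ :=
          norm_sub_le_norm_sub_add_norm_sub _ _ _
      _ ≤ (1/2 : ℝ) ^ s + (1/2 : ℝ) ^ s := add_le_add h2 h1
  -- U-frequent hypercyclicity
  have hUFH : ∀ V : Set X, IsOpen V → V.Nonempty →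
      0 < upperDensity {n : ℕ | (T ^ n) x ∈ V} := by
    intro V hV hVne
    obtain ⟨v, hv⟩ := hVne
    obtain ⟨r, hr, hball⟩ := Metric.isOpen_iff.mp hV v hv
    obtain ⟨i, hi⟩ := hYdense.exists_mem_open Metric.isOpen_ball
      ⟨v, Metric.mem_ball_self (by linarith)⟩ (s := Metric.ball v (r/2))
    obtain ⟨my, hmy1, hmyper⟩ := hper (Y i) (hY i)
    have hmypos : (0:ℝ) < my := by exact_mod_cast hmy1
    have hcpos : 0 < α / (my * (2 + α)) :=
      div_pos hα0 (mul_pos hmypos (by linarith))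
    rw [upperDensity]
    refine lt_of_lt_of_le hcpos (Filter.le_limsup_of_frequently_le ?_ ?_)
    · rw [Filter.frequently_atTop]
      intro N₀
      obtain ⟨s₁, hs₁⟩ : ∃ s₁ : ℕ, (1/2 : ℝ) ^ s₁ + (1/2 : ℝ) ^ s₁ < r/2 := by
        obtain ⟨s₁, hs₁⟩ := exists_pow_lt_of_lt_one (show (0:ℝ) < r/4 by linarith)
          (show (1/2 : ℝ) < 1 by norm_num)
        exact ⟨s₁, by linarith⟩
      obtain ⟨s, hs₀, hes⟩ := he i (max N₀ s₁)
      have hs₁s : s₁ ≤ s := le_trans (le_max_right _ _) hs₀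
      have hN₀s : N₀ ≤ s := le_trans (le_max_left _ _) hs₀
      have hpow : (1/2 : ℝ) ^ s + (1/2 : ℝ) ^ s < r/2 := by
        have := pow_le_pow_of_le_one (by norm_num : (0:ℝ) ≤ 1/2)
          (by norm_num : (1/2 : ℝ) ≤ 1) hs₁s
        linarith
      set n : ℕ := (F (s+1)).1.2 with hndef
      have hn1 : s + 1 ≤ n := hn_ge (s+1)
      have hn1' : (1:ℝ) ≤ n := by exact_mod_cast le_trans (by omega) hn1
      have hnR0 : (0:ℝ) ≤ (n:ℝ) := by linarith
      set Fl : ℕ := ⌊α * (n:ℝ)⌋₊ with hFldef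
      set K : ℕ := Fl / my with hKdef
      set N : ℕ := n + my * K with hNdef
      have hmyK : my * K ≤ Fl := by
        rw [hKdef, mul_comm]
        exact Nat.div_mul_le_self Fl my
      have hFlle : (Fl : ℝ) ≤ α * n := Nat.floor_le (by positivity)
      have horb : ∀ t ≤ K, (T ^ (n + my * t)) x ∈ V := by
        intro t ht
        have hkcast : ((my * t : ℕ) : ℝ) ≤ α * n := by
          have h1 : my * t ≤ Fl := le_trans (Nat.mul_le_mul_left my ht) hmyK
          calc ((my * t : ℕ) : ℝ) ≤ (Fl : ℝ) := by exact_mod_cast h1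
            _ ≤ α * n := hFlle
        have hest := hmain s (my * t) hkcast
        rw [hes] at hest
        have hfix : (T ^ (my * t)) (Y i) = Y i := st13_per_mul T my (Y i) hmyper t
        rw [hfix] at hest
        apply hball
        rw [Metric.mem_ball]
        have hd1 : dist ((T ^ (n + my * t)) x) (Y i) < r/2 := by
          rw [dist_eq_norm]
          exact lt_of_le_of_lt hest hpow
        have hd2 : dist (Y i) v < r/2 := Metric.mem_ball.mp hi
        calc dist ((T ^ (n + my * t)) x) v
            ≤ dist ((T ^ (n + my * t)) x) (Y i) + dist (Y i) v := dist_triangle _ _ _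
          _ < r/2 + r/2 := add_lt_add hd1 hd2
          _ = r := by ring
      refine ⟨N, by omega, ?_⟩
      have hinj : Set.InjOn (fun t => n + my * t) (Set.Iic K) := by
        intro a _ b _ hab
        simp only at hab
        have : my * a = my * b := by omega
        exact Nat.eq_of_mul_eq_mul_left (by omega) this
      have himg : (fun t => n + my * t) '' (Set.Iic K)
          ⊆ {n' : ℕ | (T ^ n') x ∈ V} ∩ Set.Iic N := by
        rintro _ ⟨t, ht, rfl⟩
        rw [Set.mem_Iic] at ht
        refine ⟨horb t ht, ?_⟩
        rw [Set.mem_Iic, hNdef]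
        exact Nat.add_le_add_left (Nat.mul_le_mul_left my ht) n
      have hfin : ({n' : ℕ | (T ^ n') x ∈ V} ∩ Set.Iic N).Finite :=
        (Set.finite_Iic N).subset Set.inter_subset_right
      have hcard : K + 1 ≤ ({n' : ℕ | (T ^ n') x ∈ V} ∩ Set.Iic N).ncard := by
        have h1 : ((fun t => n + my * t) '' (Set.Iic K)).ncard = K + 1 := by
          rw [Set.ncard_image_of_injOn hinj, ← Finset.coe_Iic, Set.ncard_coe_finset,
            Nat.card_Iic]
        rw [← h1]
        exact Set.ncard_le_ncard himg hfin
      -- now the real arithmetic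
      have hNpos : (0:ℝ) < (N:ℝ) + 1 := by positivity
      rw [le_div_iff₀ hNpos]
      have hltnat : Fl < my * K + my := by
        have hdm2 := Nat.div_add_mod Fl my
        have hmod := Nat.mod_lt Fl (show 0 < my by omega)
        rw [hKdef]
        omega
      have hlt : α * n < (my : ℝ) * K + my := by
        have h1 : α * n < (Fl : ℝ) + 1 := Nat.lt_floor_add_one _
        have h2 : (Fl : ℝ) + 1 ≤ (my : ℝ) * K + my := by exact_mod_cast hltnat
        linarith
      have hcard' : (K : ℝ) + 1 ≤ (({n' : ℕ | (T ^ n') x ∈ V} ∩ Set.Iic N).ncard : ℝ) := by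
        exact_mod_cast hcard
      have hNle : (N : ℝ) + 1 ≤ (2 + α) * n := by
        have h1 : ((my * K : ℕ) : ℝ) ≤ α * n := le_trans (by exact_mod_cast hmyK) hFlle
        have h2 : (N : ℝ) = (n : ℝ) + ((my * K : ℕ) : ℝ) := by
          rw [hNdef]; push_cast; ring
        linarith
      have hkey : α * n / my ≤ (K : ℝ) + 1 := by
        rw [div_le_iff₀ hmypos]
        nlinarith
      have hid : α / (my * (2 + α)) * ((2 + α) * n) = α * n / my := by
        field_simp
      calc α / ((my : ℝ) * (2 + α)) * ((N : ℝ) + 1)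
          ≤ α / ((my : ℝ) * (2 + α)) * ((2 + α) * n) :=
            mul_le_mul_of_nonneg_left hNle hcpos.le
        _ = α * (n:ℝ) / (my:ℝ) := hid
        _ ≤ (K : ℝ) + 1 := hkey
        _ ≤ _ := hcard'
    · apply Filter.isBoundedUnder_of
      refine ⟨1, fun N => ?_⟩
      rw [div_le_one (by positivity)]
      have h1 : ({n : ℕ | (T ^ n) x ∈ V} ∩ Set.Iic N).ncard ≤ (Set.Iic N).ncard :=
        Set.ncard_le_ncard Set.inter_subset_right (Set.finite_Iic N)
      have h2 : (Set.Iic N).ncard = N + 1 := by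
        rw [← Finset.coe_Iic, Set.ncard_coe_finset, Nat.card_Iic]
      rw [h2] at h1
      exact_mod_cast h1
  -- dense orbit
  have hdense_orbit : Dense (Set.range fun n : ℕ => (T ^ n) x) := by
    rw [dense_iff_inter_open]
    intro U hU hUne
    by_contra hempty
    have hset : {n : ℕ | (T ^ n) x ∈ U} = ∅ := by
      ext n
      simp only [Set.mem_setOf_eq, Set.mem_empty_iff_false, iff_false]
      intro hmem
      exact hempty ⟨(T ^ n) x, hmem, ⟨n, rfl⟩⟩
    have := hUFH U hU hUne
    rw [hset] at this
    have hzero : upperDensity (∅ : Set ℕ) = 0 := by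
      rw [upperDensity]
      have : (fun N : ℕ => (((∅ : Set ℕ) ∩ Set.Iic N).ncard : ℝ) / ((N : ℝ) + 1))
          = fun _ => (0:ℝ) := by
        funext N
        simp
      rw [this, Filter.limsup_const]
    rw [hzero] at this
    exact lt_irrefl 0 this
  exact ⟨⟨⟨x, hdense_orbit⟩, hperdense⟩, ⟨x, hUFH⟩⟩
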